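/- For real $\alpha, \beta > 0$ and $n \ge 0$, the $n$-th derivative of the two-parameter Mittag-Leffler function satisfies $M_{\alpha,\beta}^{(n)}(x) = n!\, M^{n+1}_{\alpha, n\alpha+\beta}(x)$, where $M^\gamma_{\alpha,\beta}(z) = \frac{1}{\Gamma(\gamma)}\sum_{k=0}^\infty \frac{\Gamma(\gamma+k)}{k!\Gamma(\alpha k + \beta)} z^k$ is the three-parameter (Prabhakar) Mittag-Leffler function. -/

import Mathlib

open Real Filter Topology

/-- The two-parameter Mittag-Leffler function `M_{α,β}(x) = ∑ x^k / Γ(αk+β)`. -/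
noncomputable def mittagLeffler2 (α β x : ℝ) : ℝ :=
  ∑' k : ℕ, x ^ k / Real.Gamma (α * k + β)

/-- The three-parameter (Prabhakar) Mittag-Leffler function
`M^γ_{α,β}(x) = (1/Γ(γ)) ∑ Γ(γ+k)/(k! Γ(αk+β)) x^k`. -/
noncomputable def mittagLeffler3 (α β γ x : ℝ) : ℝ :=
  (1 / Real.Gamma γ) *
    ∑' k : ℕ, Real.Gamma (γ + k) / (k.factorial * Real.Gamma (α * k + β)) * x ^ k

/-- Coefficients of the `n`-th derivative of the two-parameter Mittag-Leffler series. -/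
noncomputable def mlCoeff (α β : ℝ) (n k : ℕ) : ℝ :=
  ((k + n).factorial / k.factorial : ℝ) / Real.Gamma (α * (k + n) + β)

lemma mlCoeff_pos {α β : ℝ} (hα : 0 < α) (hβ : 0 < β) (n k : ℕ) : 0 < mlCoeff α β n k := by
  unfold mlCoeff
  have h1 : (0:ℝ) < ((k + n).factorial : ℝ) := by positivity
  have h2 : (0:ℝ) < (k.factorial : ℝ) := by positivity
  have h3 : 0 < Real.Gamma (α * (k + n) + β) :=
    Real.Gamma_pos_of_pos (by positivity)
  positivity

lemma mlCoeff_succ (α β : ℝ) (n k : ℕ) :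
    mlCoeff α β (n + 1) k = (k + 1 : ℝ) * mlCoeff α β n (k + 1) := by
  unfold mlCoeff
  have e1 : α * ((k:ℝ) + (n + 1 : ℕ)) + β = α * (((k + 1 : ℕ) : ℝ) + n) + β := by
    push_cast; ring
  rw [e1]
  have e2 : k + (n + 1) = (k + 1) + n := by omega
  rw [e2]
  rw [← mul_div_assoc]
  congr 1
  have h3 : (k.factorial : ℝ) ≠ 0 := by positivity
  have h2 : ((k:ℝ) + 1) ≠ 0 := by positivity
  rw [Nat.factorial_succ]
  push_cast
  field_simp

/-- Log-convexity of `Γ` implies `Γ(t+α) ≥ (t-1)^α Γ(t)`, so the ratio tends to `∞`. -/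
lemma gamma_ratio_eventually {α : ℝ} (hα : 0 < α) (M : ℝ) :
    ∀ᶠ t in atTop, M * Real.Gamma t ≤ Real.Gamma (t + α) := by
  set M' := max M 1 with hM'def
  have hM'1 : (1:ℝ) ≤ M' := le_max_right _ _
  have hM'0 : (0:ℝ) < M' := lt_of_lt_of_le one_pos hM'1
  filter_upwards [eventually_ge_atTop (max 2 (1 + M' ^ (1/α)))] with t ht
  have ht2 : (2:ℝ) ≤ t := le_trans (le_max_left _ _) ht
  have htM : 1 + M' ^ (1/α) ≤ t := le_trans (le_max_right _ _) ht
  have hpos : (0:ℝ) < t - 1 := by linarith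
  have htpos : (0:ℝ) < t := by linarith
  have hGt : 0 < Real.Gamma t := Real.Gamma_pos_of_pos htpos
  have hGt1 : 0 < Real.Gamma (t - 1) := Real.Gamma_pos_of_pos hpos
  -- slope inequality from log-convexity
  have hsl := Real.convexOn_log_Gamma.slope_mono_adjacent
    (x := t - 1) (y := t) (z := t + α)
    (Set.mem_Ioi.2 hpos) (Set.mem_Ioi.2 (by linarith)) (by linarith) (by linarith)
  have hfe : Real.Gamma t = (t - 1) * Real.Gamma (t - 1) := by
    have := Real.Gamma_add_one (s := t - 1) hpos.ne'
    simpa using this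
  have hslope1 : (Real.log ∘ Real.Gamma) t - (Real.log ∘ Real.Gamma) (t - 1) = Real.log (t - 1) := by
    simp only [Function.comp_apply]
    rw [hfe, Real.log_mul hpos.ne' hGt1.ne']
    ring
  have hd1 : t - (t - 1) = 1 := by ring
  have hd2 : t + α - t = α := by ring
  rw [hd1, hd2, hslope1, div_one] at hsl
  -- exponentiate
  have key : Real.Gamma t * (t - 1) ^ α ≤ Real.Gamma (t + α) := by
    have hGta : 0 < Real.Gamma (t + α) := Real.Gamma_pos_of_pos (by linarith)
    have h1 : Real.log (Real.Gamma t * (t - 1) ^ α) ≤ Real.log (Real.Gamma (t + α)) := by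
      rw [Real.log_mul hGt.ne' (Real.rpow_pos_of_pos hpos α).ne',
        Real.log_rpow hpos]
      simp only [Function.comp_apply] at hsl
      have h2 := (le_div_iff₀ hα).1 hsl
      nlinarith [mul_comm α (Real.log (t - 1))]
    have := Real.exp_le_exp.2 h1
    rwa [Real.exp_log (by positivity), Real.exp_log hGta] at this
  have hMle : M ≤ (t - 1) ^ α := by
    have h1 : M' ^ (1/α) ≤ t - 1 := by linarith
    have h2 : (M' ^ (1/α)) ^ α ≤ (t - 1) ^ α :=
      Real.rpow_le_rpow (Real.rpow_nonneg hM'0.le _) h1 hα.le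
    rw [← Real.rpow_mul hM'0.le, one_div, inv_mul_cancel₀ hα.ne', Real.rpow_one] at h2
    exact le_trans (le_trans (le_max_left M 1) h2) (le_refl _)
  calc M * Real.Gamma t ≤ (t - 1) ^ α * Real.Gamma t :=
        mul_le_mul_of_nonneg_right hMle hGt.le
    _ = Real.Gamma t * (t - 1) ^ α := by ring
    _ ≤ Real.Gamma (t + α) := key

lemma summable_mlCoeff {α β : ℝ} (hα : 0 < α) (hβ : 0 < β) (n : ℕ) (x : ℝ) :
    Summable (fun k : ℕ => mlCoeff α β n k * x ^ k) := by
  apply summable_of_ratio_norm_eventually_le (r := 1/2) (by norm_num)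
  set M : ℝ := 2 * (n + 1) * (|x| + 1) with hMdef
  have hM0 : 0 < M := by positivity
  have hev := gamma_ratio_eventually hα M
  rw [eventually_atTop] at hev
  obtain ⟨T, hT⟩ := hev
  have htend : Tendsto (fun k : ℕ => α * ((k:ℝ) + n) + β) atTop atTop := by
    apply Filter.tendsto_atTop_add_const_right
    apply Tendsto.const_mul_atTop hα
    apply Filter.tendsto_atTop_add_const_right
    exact tendsto_natCast_atTop_atTop
  filter_upwards [htend.eventually_ge_atTop T] with k hk
  set t : ℝ := α * ((k:ℝ) + n) + β with htdef
  have hGt : 0 < Real.Gamma t := Real.Gamma_pos_of_pos (by positivity)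
  have hGta : 0 < Real.Gamma (t + α) := Real.Gamma_pos_of_pos (by positivity)
  have hratio := hT t hk
  -- mlCoeff at k+1
  have harg : α * (((k+1:ℕ):ℝ) + n) + β = t + α := by rw [htdef]; push_cast; ring
  have hnum : (((k+1) + n).factorial : ℝ) / ((k+1).factorial : ℝ)
      ≤ (n + 1) * (((k + n).factorial : ℝ) / (k.factorial : ℝ)) := by
    have e : (k+1) + n = (k + n) + 1 := by omega
    rw [e, Nat.factorial_succ, Nat.factorial_succ]
    have hkf : (0:ℝ) < (k.factorial : ℝ) := by positivity
    rw [mul_div_assoc' ((n:ℝ)+1) _ _, div_le_div_iff₀ (by positivity) (by positivity)]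
    have hineq : ((k:ℝ) + n + 1) ≤ ((n:ℝ) + 1) * ((k:ℝ) + 1) := by
      nlinarith [Nat.cast_nonneg (α := ℝ) k, Nat.cast_nonneg (α := ℝ) n]
    have hfp : (0:ℝ) < (((k+n).factorial : ℕ) : ℝ) := by positivity
    have := mul_le_mul_of_nonneg_right hineq (le_of_lt (mul_pos hfp hkf))
    push_cast
    push_cast at this
    nlinarith [this]
  have hc1 : mlCoeff α β n (k+1) = ((((k+1) + n).factorial : ℝ) / ((k+1).factorial : ℝ)) / Real.Gamma (t + α) := by
    unfold mlCoeff; rw [harg]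
  have hc0 : mlCoeff α β n k = (((k + n).factorial : ℝ) / (k.factorial : ℝ)) / Real.Gamma t := by
    unfold mlCoeff; rfl
  have hcpos := mlCoeff_pos hα hβ (α := α) (β := β) n k
  have hstep : mlCoeff α β n (k+1) ≤ ((n:ℝ) + 1) / M * mlCoeff α β n k := by
    rw [hc1, hc0]
    rw [div_le_iff₀ hGta]
    have hMG : M * Real.Gamma t ≤ Real.Gamma (t + α) := hratio
    have h2 : ((n:ℝ) + 1) / M * ((((k + n).factorial : ℝ) / (k.factorial : ℝ)) / Real.Gamma t) * (M * Real.Gamma t)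
        = (n + 1) * (((k + n).factorial : ℝ) / (k.factorial : ℝ)) := by
      field_simp
    calc (((k+1) + n).factorial : ℝ) / ((k+1).factorial : ℝ)
        ≤ (n + 1) * (((k + n).factorial : ℝ) / (k.factorial : ℝ)) := hnum
      _ = ((n:ℝ) + 1) / M * ((((k + n).factorial : ℝ) / (k.factorial : ℝ)) / Real.Gamma t) * (M * Real.Gamma t) := h2.symm
      _ ≤ ((n:ℝ) + 1) / M * ((((k + n).factorial : ℝ) / (k.factorial : ℝ)) / Real.Gamma t) * Real.Gamma (t + α) := by
          apply mul_le_mul_of_nonneg_left hMG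
          have : (0:ℝ) < (((k + n).factorial : ℝ) / (k.factorial : ℝ)) / Real.Gamma t := by
            rw [← hc0]; exact hcpos
          positivity
  -- now the norm inequality
  have hc1pos := mlCoeff_pos hα hβ (α := α) (β := β) n (k+1)
  rw [Real.norm_eq_abs, Real.norm_eq_abs, abs_mul, abs_mul,
    abs_of_pos hc1pos, abs_of_pos hcpos, abs_pow, abs_pow, pow_succ]
  have hxle : |x| ≤ |x| + 1 := by linarith
  calc mlCoeff α β n (k+1) * (|x| ^ k * |x|)
      ≤ (((n:ℝ) + 1) / M * mlCoeff α β n k) * (|x| ^ k * (|x| + 1)) := by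
        apply mul_le_mul hstep _ (by positivity)
          (by positivity)
        apply mul_le_mul_of_nonneg_left hxle (by positivity)
    _ = ((n:ℝ) + 1) * (|x| + 1) / M * (mlCoeff α β n k * |x| ^ k) := by ring
    _ = 1/2 * (mlCoeff α β n k * |x| ^ k) := by
        rw [hMdef]
        congr 1
        field_simp

lemma hasDerivAt_ml {α β : ℝ} (hα : 0 < α) (hβ : 0 < β) (n : ℕ) (x : ℝ) :
    HasDerivAt (fun y : ℝ => ∑' k : ℕ, mlCoeff α β n k * y ^ k)
      (∑' k : ℕ, mlCoeff α β (n + 1) k * x ^ k) x := by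
  set R : ℝ := |x| + 1 with hRdef
  have hR : 0 < R := by positivity
  have hxR : x ∈ Metric.ball (0:ℝ) R := by
    simp only [Metric.mem_ball, Real.dist_eq, sub_zero]
    linarith [abs_nonneg x]
  set u : ℕ → ℝ := fun k => mlCoeff α β n k * ((k:ℝ) * R ^ (k - 1)) with hudef
  have hu : Summable u := by
    rw [← summable_nat_add_iff 1]
    have : (fun k : ℕ => u (k + 1)) = fun k : ℕ => mlCoeff α β (n+1) k * R ^ k := by
      funext k
      simp only [hudef, Nat.add_sub_cancel, mlCoeff_succ]
      push_cast
      ring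
    rw [this]
    exact summable_mlCoeff hα hβ (n+1) R
  have hg : ∀ (k : ℕ) (y : ℝ), y ∈ Metric.ball (0:ℝ) R →
      HasDerivAt (fun z : ℝ => mlCoeff α β n k * z ^ k)
        (mlCoeff α β n k * ((k:ℝ) * y ^ (k - 1))) y := by
    intro k y _
    exact (hasDerivAt_pow k y).const_mul _
  have hg' : ∀ (k : ℕ) (y : ℝ), y ∈ Metric.ball (0:ℝ) R →
      ‖mlCoeff α β n k * ((k:ℝ) * y ^ (k - 1))‖ ≤ u k := by
    intro k y hy
    simp only [Metric.mem_ball, Real.dist_eq, sub_zero] at hy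
    have hcpos := mlCoeff_pos hα hβ (α := α) (β := β) n k
    rw [Real.norm_eq_abs, abs_mul, abs_mul, abs_of_pos hcpos, Nat.abs_cast, abs_pow]
    apply mul_le_mul_of_nonneg_left _ hcpos.le
    apply mul_le_mul_of_nonneg_left _ (Nat.cast_nonneg k)
    exact pow_le_pow_left₀ (abs_nonneg y) hy.le _
  have hg0 : Summable (fun k : ℕ => mlCoeff α β n k * (0:ℝ) ^ k) :=
    summable_mlCoeff hα hβ n 0
  have hder := hasDerivAt_tsum_of_isPreconnected hu Metric.isOpen_ball
    (convex_ball (0:ℝ) R).isPreconnected hg hg'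
    (Metric.mem_ball_self hR) hg0 hxR
  refine hder.congr_deriv ?_
  symm
  -- ∑' k, mlCoeff (n+1) k * x^k = ∑' k, mlCoeff n k * (k * x^(k-1))
  have hsum : Summable (fun k : ℕ => mlCoeff α β n k * ((k:ℝ) * x ^ (k - 1))) :=
    Summable.of_norm_bounded hu (fun k => hg' k x hxR)
  rw [Summable.tsum_eq_zero_add hsum]
  simp only [Nat.cast_zero, zero_mul, mul_zero, zero_add]
  apply tsum_congr
  intro k
  rw [mlCoeff_succ]
  simp only [Nat.add_sub_cancel]
  push_cast
  ring

lemma iteratedDeriv_ml {α β : ℝ} (hα : 0 < α) (hβ : 0 < β) (n : ℕ) :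
    iteratedDeriv n (mittagLeffler2 α β) = fun x : ℝ => ∑' k : ℕ, mlCoeff α β n k * x ^ k := by
  induction n with
  | zero =>
    rw [iteratedDeriv_zero]
    funext x
    unfold mittagLeffler2
    apply tsum_congr
    intro k
    unfold mlCoeff
    have h1 : ((k + 0).factorial : ℝ) / (k.factorial : ℝ) = 1 := by
      rw [Nat.add_zero]
      exact div_self (by positivity)
    rw [h1]
    push_cast
    ring
  | succ n ih =>
    rw [iteratedDeriv_succ, ih]
    funext x
    exact (hasDerivAt_ml hα hβ n x).deriv

/-- for `α, β > 0` and `n ≥ 0`,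
`M_{α,β}^{(n)}(x) = n! M^{n+1}_{α, nα+β}(x)`. -/
theorem mittagLeffler2_iteratedDeriv (α β : ℝ) (hα : 0 < α) (hβ : 0 < β) (n : ℕ)
    (x : ℝ) :
    iteratedDeriv n (mittagLeffler2 α β) x =
      (n.factorial : ℝ) * mittagLeffler3 α (n * α + β) (n + 1) x := by
  rw [iteratedDeriv_ml hα hβ n]
  unfold mittagLeffler3
  have hfact : Real.Gamma ((n:ℝ) + 1) = (n.factorial : ℝ) := Real.Gamma_nat_eq_factorial n
  rw [hfact]
  have hn0 : (n.factorial : ℝ) ≠ 0 := by positivity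
  have hterm : ∀ k : ℕ, Real.Gamma ((n:ℝ) + 1 + k) / ((k.factorial : ℝ) * Real.Gamma (α * k + ((n:ℝ) * α + β))) * x ^ k
      = mlCoeff α β n k * x ^ k := by
    intro k
    have e1 : ((n:ℝ) + 1 + k) = ((n + k : ℕ) : ℝ) + 1 := by push_cast; ring
    rw [e1, Real.Gamma_nat_eq_factorial (n + k)]
    unfold mlCoeff
    have e2 : α * ((k:ℝ) + n) + β = α * (k:ℝ) + ((n:ℝ) * α + β) := by ring
    rw [e2]
    have e3 : (k + n) = (n + k) := by omega
    rw [e3]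
    rw [div_div]
  rw [tsum_congr hterm]
  rw [← mul_assoc, mul_one_div, div_self hn0, one_mul]
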